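/- Let R > 0, M > 0 and let f be holomorphic on {z ∈ ℂ : |z| ≥ R} with |f(z) − (z + 1)| ≤ M/|z| for all |z| ≥ R. Then there exist R' ≥ R and a holomorphic map u : E_{R'} → ℂ such that f maps E_{R'} into itself, u(f(z)) = u(z) + 1 for all z ∈ E_{R'}, and u(z) = z(1 + o(1)) as Re z → ∞; that is, for every δ > 0 there exists ρ ≥ R' such that |u(z)/z − 1| ≤ δ whenever z ∈ E_{R'} and Re z ≥ ρ. -/

import Mathlib

open Complex Set Metric Filter Topology

lemma re_le_norm' (z : ℂ) : z.re ≤ ‖z‖ := by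
  exact Complex.re_le_norm z

lemma abs_re_le_norm' (z : ℂ) : |z.re| ≤ ‖z‖ := by
  exact Complex.abs_re_le_norm z

lemma stepHalf (R M R₀ : ℝ) (hR : 0 < R) (hM : 0 < M) (f : ℂ → ℂ)
    (hbound : ∀ z : ℂ, R ≤ ‖z‖ → ‖f z - (z + 1)‖ ≤ M / ‖z‖)
    (hR₀1 : 2 * R ≤ R₀) (hR₀2 : 2 * M ≤ R₀) (hR₀3 : 2 ≤ R₀) :
    ∀ z : ℂ, R₀ ≤ z.re → z.re + 1/2 ≤ (f z).re ∧ ‖f z - z‖ ≤ 3/2 := by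
  intro z hz
  have h2 : 0 < z.re := lt_of_lt_of_le (by linarith) hz
  have hzn : z.re ≤ ‖z‖ := re_le_norm' z
  have hRz : R ≤ ‖z‖ := by linarith
  have hb := hbound z hRz
  have hMz : M / ‖z‖ ≤ 1/2 := by
    rw [div_le_iff₀ (by linarith : (0:ℝ) < ‖z‖)]
    linarith
  have hb2 : ‖f z - (z + 1)‖ ≤ 1/2 := hb.trans hMz
  have hre : |(f z - (z + 1)).re| ≤ 1/2 := le_trans (abs_re_le_norm' _) hb2
  have hre2 : (f z - (z + 1)).re = (f z).re - (z.re + 1) := by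
    simp [Complex.sub_re, Complex.add_re]
  constructor
  · rw [hre2] at hre
    have := abs_le.mp hre
    linarith [this.1]
  · have hfz : f z - z = (f z - (z + 1)) + 1 := by ring
    rw [hfz]
    calc ‖(f z - (z + 1)) + 1‖ ≤ ‖f z - (z + 1)‖ + ‖(1:ℂ)‖ := norm_add_le _ _
      _ ≤ 1/2 + 1 := by rw [norm_one]; linarith
      _ ≤ 3/2 := by norm_num

lemma orbitStep (f : ℂ → ℂ) (R₀ : ℝ)
    (hstep : ∀ z : ℂ, R₀ ≤ z.re → z.re + 1/2 ≤ (f z).re) :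
    ∀ (k : ℕ) (z : ℂ), R₀ ≤ z.re → z.re + k / 2 ≤ (f^[k] z).re := by
  intro k
  induction k with
  | zero => intro z hz; simp
  | succ n ih =>
    intro z hz
    rw [Function.iterate_succ_apply']
    have h1 := ih z hz
    have hn : (0:ℝ) ≤ (n:ℝ) := Nat.cast_nonneg n
    have h2 : R₀ ≤ (f^[n] z).re := by linarith
    have h3 := hstep _ h2
    push_cast
    push_cast at h1
    linarith

lemma keyEst (R M C R₀ : ℝ) (hR : 0 < R) (hM : 0 < M) (hC0 : 0 ≤ C) (f : ℂ → ℂ) (a : ℂ)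
    (hbound : ∀ z : ℂ, R ≤ ‖z‖ → ‖f z - (z + 1)‖ ≤ M / ‖z‖)
    (hga : ∀ z : ℂ, 2 * R ≤ ‖z‖ → ‖z * (f z - z - 1) - a‖ ≤ C / ‖z‖)
    (hR₀1 : 2 * R ≤ R₀) (hR₀2 : 2 * M ≤ R₀) (hR₀3 : 2 ≤ R₀) :
    ∀ z : ℂ, R₀ ≤ z.re →
      ‖(f z - a * Complex.log (f z)) - (z - a * Complex.log z) - 1‖
        ≤ (C + ‖a‖ * M + 3 * ‖a‖) / z.re ^ 2 := by
  intro z hz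
  have hstep := stepHalf R M R₀ hR hM f hbound hR₀1 hR₀2 hR₀3 z hz
  have h2 : 0 < z.re := by linarith
  have hzn : z.re ≤ ‖z‖ := re_le_norm' z
  have hnz : 0 < ‖z‖ := by linarith
  have hz0 : z ≠ 0 := by simpa [norm_pos_iff] using hnz
  have hRz : R ≤ ‖z‖ := by linarith
  have h2Rz : 2 * R ≤ ‖z‖ := by linarith
  have hb := hbound z hRz
  have hga' := hga z h2Rz
  set s : Set ℂ := segment ℝ z (f z) with hs
  have hsre : ∀ w ∈ s, z.re ≤ w.re := by
    rintro w ⟨p, q, hp, hq, hpq, rfl⟩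
    have hrw : (p • z + q • f z).re = p * z.re + q * (f z).re := by
      simp [Complex.add_re, Complex.smul_re]
    rw [hrw]
    nlinarith [hstep.1]
  have hsnorm : ∀ w ∈ s, ‖w - z‖ ≤ 3/2 := by
    rintro w ⟨p, q, hp, hq, hpq, rfl⟩
    have hp1 : p = 1 - q := by linarith
    have hw : p • z + q • f z - z = q • (f z - z) := by
      rw [hp1, sub_smul, one_smul, smul_sub]
      ring
    rw [hw, norm_smul]
    have hq' : ‖q‖ = q := by rw [Real.norm_eq_abs, _root_.abs_of_nonneg hq]
    rw [hq']
    nlinarith [hstep.2, norm_nonneg (f z - z)]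
  set F : ℂ → ℂ := fun w => Complex.log w - w * (z : ℂ)⁻¹ with hF
  have hder : ∀ w ∈ s, HasDerivWithinAt F (w⁻¹ - z⁻¹) s w := by
    intro w hw
    have hwre : 0 < w.re := lt_of_lt_of_le h2 (hsre w hw)
    have hlog : HasDerivAt Complex.log w⁻¹ w :=
      Complex.hasDerivAt_log (Complex.mem_slitPlane_iff.mpr (Or.inl hwre))
    have hlin : HasDerivAt (fun w : ℂ => w * z⁻¹) z⁻¹ w := hasDerivAt_mul_const z⁻¹
    exact (hlog.sub hlin).hasDerivWithinAt
  have hderb : ∀ w ∈ s, ‖w⁻¹ - z⁻¹‖ ≤ (3/2) / z.re ^ 2 := by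
    intro w hw
    have hwre : 0 < w.re := lt_of_lt_of_le h2 (hsre w hw)
    have hwn : 0 < ‖w‖ := lt_of_lt_of_le hwre (re_le_norm' w)
    have hw0 : w ≠ 0 := by simpa [norm_pos_iff] using hwn
    have hid : w⁻¹ - z⁻¹ = (z - w) / (w * z) := by field_simp
    rw [hid, norm_div, norm_mul]
    have h1 : ‖z - w‖ ≤ 3/2 := by rw [← norm_neg]; simpa [neg_sub] using hsnorm w hw
    have h2' : z.re ≤ ‖w‖ := le_trans (hsre w hw) (re_le_norm' w)
    calc ‖z - w‖ / (‖w‖ * ‖z‖) ≤ (3/2) / (z.re * z.re) := by gcongr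
      _ = (3/2) / z.re ^ 2 := by ring_nf
  have hmvt := (convex_segment z (f z)).norm_image_sub_le_of_norm_hasDerivWithin_le hder hderb
      (left_mem_segment ℝ z (f z)) (right_mem_segment ℝ z (f z))
  have hD : ‖F (f z) - F z‖ ≤ (9/4) / z.re ^ 2 := by
    calc ‖F (f z) - F z‖ ≤ (3/2) / z.re ^ 2 * ‖f z - z‖ := hmvt
      _ ≤ (3/2) / z.re ^ 2 * (3/2) := by gcongr; exact hstep.2
      _ = (9/4) / z.re ^ 2 := by ring
  set D : ℂ := F (f z) - F z with hDdef
  have hfe : Complex.log (f z) = Complex.log z + (f z - z) * z⁻¹ + D := by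
    rw [hDdef, hF]
    simp only []
    field_simp
    ring
  have hid2 : (f z - a * Complex.log (f z)) - (z - a * Complex.log z) - 1
      = (z * (f z - z - 1) - a) * z⁻¹ - a * (f z - (z + 1)) * z⁻¹ - a * D := by
    rw [hfe]
    field_simp
    ring
  rw [hid2]
  have hn1 : ‖(z * (f z - z - 1) - a) * z⁻¹‖ ≤ C / z.re ^ 2 := by
    rw [norm_mul, norm_inv]
    calc ‖z * (f z - z - 1) - a‖ * ‖z‖⁻¹ ≤ (C / ‖z‖) * ‖z‖⁻¹ := by gcongr
      _ = C / ‖z‖ ^ 2 := by rw [← div_eq_mul_inv, div_div, ← pow_two]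
      _ ≤ C / z.re ^ 2 := by
          apply div_le_div_of_nonneg_left hC0 (by positivity)
          exact pow_le_pow_left₀ h2.le hzn 2
  have hn2 : ‖a * (f z - (z + 1)) * z⁻¹‖ ≤ ‖a‖ * M / z.re ^ 2 := by
    rw [norm_mul, norm_mul, norm_inv]
    calc ‖a‖ * ‖f z - (z + 1)‖ * ‖z‖⁻¹ ≤ ‖a‖ * (M / ‖z‖) * ‖z‖⁻¹ := by gcongr
      _ = ‖a‖ * M / ‖z‖ ^ 2 := by rw [← mul_div_assoc, ← div_eq_mul_inv, div_div, ← pow_two]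
      _ ≤ ‖a‖ * M / z.re ^ 2 := by
          apply div_le_div_of_nonneg_left (by positivity) (by positivity)
          exact pow_le_pow_left₀ h2.le hzn 2
  have hn3 : ‖a * D‖ ≤ 3 * ‖a‖ / z.re ^ 2 := by
    rw [norm_mul]
    calc ‖a‖ * ‖D‖ ≤ ‖a‖ * ((9/4) / z.re ^ 2) := by gcongr
      _ ≤ 3 * ‖a‖ / z.re ^ 2 := by
          rw [mul_div_assoc']
          apply div_le_div_of_nonneg_right ?_ (by positivity)
          nlinarith [norm_nonneg a]
  calc ‖(z * (f z - z - 1) - a) * z⁻¹ - a * (f z - (z + 1)) * z⁻¹ - a * D‖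
      ≤ ‖(z * (f z - z - 1) - a) * z⁻¹ - a * (f z - (z + 1)) * z⁻¹‖ + ‖a * D‖ := norm_sub_le _ _
    _ ≤ ‖(z * (f z - z - 1) - a) * z⁻¹‖ + ‖a * (f z - (z + 1)) * z⁻¹‖ + ‖a * D‖ := by
        gcongr
        exact norm_sub_le _ _
    _ ≤ C / z.re ^ 2 + ‖a‖ * M / z.re ^ 2 + 3 * ‖a‖ / z.re ^ 2 := by gcongr
    _ = (C + ‖a‖ * M + 3 * ‖a‖) / z.re ^ 2 := by ring

-- Step A: from the hypotheses, extract `a` and the bound ‖z(f z - z - 1) - a‖ ≤ C/‖z‖.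
lemma stepA (R M : ℝ) (hR : 0 < R) (hM : 0 < M) (f : ℂ → ℂ)
    (hDf : ∀ x : ℂ, R < ‖x‖ → DifferentiableAt ℂ f x)
    (hbound : ∀ z : ℂ, R ≤ ‖z‖ → ‖f z - (z + 1)‖ ≤ M / ‖z‖) :
    ∃ a : ℂ, ∃ C : ℝ, 0 ≤ C ∧
      ∀ z : ℂ, 2 * R ≤ ‖z‖ → ‖z * (f z - z - 1) - a‖ ≤ C / ‖z‖ := by
  set g : ℂ → ℂ := fun z => z * (f z - z - 1) with hgdef
  have hgb : ∀ z : ℂ, R ≤ ‖z‖ → ‖g z‖ ≤ M := by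
    intro z hz
    have h0 : 0 < ‖z‖ := lt_of_lt_of_le hR hz
    have h1 : f z - z - 1 = f z - (z + 1) := by ring
    have : ‖g z‖ = ‖z‖ * ‖f z - (z + 1)‖ := by rw [hgdef]; simp [norm_mul, h1]
    rw [this]
    calc ‖z‖ * ‖f z - (z + 1)‖ ≤ ‖z‖ * (M / ‖z‖) :=
          mul_le_mul_of_nonneg_left (hbound z hz) (norm_nonneg z)
      _ = M := mul_div_cancel₀ M (ne_of_gt h0)
  have hgd : DifferentiableOn ℂ (fun w : ℂ => g w⁻¹) (ball (0:ℂ) R⁻¹ \ {0}) := by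
    rintro w ⟨hw1, hw2⟩
    have hw0 : w ≠ 0 := hw2
    have hwn : 0 < ‖w‖ := norm_pos_iff.mpr hw0
    have hwlt : ‖w‖ < R⁻¹ := by simpa [mem_ball_zero_iff] using hw1
    have hinv : R < ‖w⁻¹‖ := by
      rw [norm_inv]
      exact (lt_inv_comm₀ hwn hR).mp hwlt
    have hdi : DifferentiableAt ℂ (fun w : ℂ => w⁻¹) w := differentiableAt_inv hw0
    have : DifferentiableAt ℂ (fun w : ℂ => g w⁻¹) w := by
      simp only [hgdef]
      exact hdi.mul ((((hDf _ hinv).comp w hdi).sub hdi).sub (differentiableAt_const 1))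
    exact this.differentiableWithinAt
  have hbdd : BddAbove (norm ∘ (fun w : ℂ => g w⁻¹) '' (ball (0:ℂ) R⁻¹ \ {0})) := by
    refine ⟨M, ?_⟩
    rintro x ⟨w, ⟨hw1, hw2⟩, rfl⟩
    have hw0 : w ≠ 0 := hw2
    have hwn : 0 < ‖w‖ := norm_pos_iff.mpr hw0
    have hwlt : ‖w‖ < R⁻¹ := by simpa [mem_ball_zero_iff] using hw1
    have hinv : R < ‖w⁻¹‖ := by
      rw [norm_inv]
      exact (lt_inv_comm₀ hwn hR).mp hwlt
    exact hgb _ hinv.le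
  have hball : ball (0:ℂ) R⁻¹ ∈ 𝓝 (0:ℂ) := ball_mem_nhds _ (by positivity)
  set G : ℂ → ℂ :=
    Function.update (fun w : ℂ => g w⁻¹) 0 (limUnder (𝓝[≠] (0:ℂ)) (fun w : ℂ => g w⁻¹)) with hGdef
  have hGd : DifferentiableOn ℂ G (ball (0:ℂ) R⁻¹) :=
    Complex.differentiableOn_update_limUnder_of_bddAbove hball hgd hbdd
  have hdsd : DifferentiableOn ℂ (dslope G 0) (ball (0:ℂ) R⁻¹) :=
    (Complex.differentiableOn_dslope hball).2 hGd
  have hsub : closedBall (0:ℂ) (2*R)⁻¹ ⊆ ball (0:ℂ) R⁻¹ := by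
    apply closedBall_subset_ball
    rw [inv_lt_inv₀ (by positivity) hR]
    linarith
  obtain ⟨C, hC⟩ := (isCompact_closedBall (0:ℂ) (2*R)⁻¹).exists_bound_of_continuousOn
    ((hdsd.mono hsub).continuousOn)
  have hC0 : 0 ≤ C :=
    le_trans (norm_nonneg _) (hC 0 (mem_closedBall_self (by positivity)))
  refine ⟨G 0, C, hC0, ?_⟩
  intro z hz
  have hzn : 0 < ‖z‖ := by linarith [hR]
  have hz0 : z ≠ 0 := by simpa [norm_pos_iff] using hzn
  have hwne : z⁻¹ ≠ 0 := inv_ne_zero hz0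
  have hwm : z⁻¹ ∈ closedBall (0:ℂ) (2*R)⁻¹ := by
    rw [mem_closedBall_zero_iff, norm_inv]
    exact inv_anti₀ (by positivity) hz
  have hGz : G z⁻¹ = g z := by
    rw [hGdef, Function.update_of_ne hwne]
    simp
  have hCz := hC z⁻¹ hwm
  rw [dslope_of_ne _ hwne, slope_def_field] at hCz
  -- slope : (G z⁻¹ - G 0)/(z⁻¹ - 0)
  have hval : (G z⁻¹ - G 0) / (z⁻¹ - 0) = z * (g z - G 0) := by
    rw [hGz, sub_zero, div_eq_mul_inv, inv_inv]
    ring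
  rw [hval] at hCz
  have : ‖z * (g z - G 0)‖ = ‖z‖ * ‖g z - G 0‖ := norm_mul _ _
  rw [this] at hCz
  rw [div_eq_mul_inv]
  show ‖g z - G 0‖ ≤ C * ‖z‖⁻¹
  have h3 : ‖g z - G 0‖ = (‖z‖ * ‖g z - G 0‖) * ‖z‖⁻¹ := by
    rw [mul_comm ‖z‖ _, mul_assoc, mul_inv_cancel₀ (ne_of_gt hzn), mul_one]
  rw [h3]
  gcongr


/-- Existence of a Fatou coordinate with the asymptotics `u(z) = z(1 + o(1))` as
`Re z → ∞` (Lemma on `u_0` in Appendix A.3): if `f` is holomorphic on `{|z| ≥ R}` with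
`|f(z) − (z+1)| ≤ M/|z|` there, then a right half-plane `E_{R'} = {Re z ≥ R'}` is mapped
into itself by `f`, and there is a holomorphic `u` on `E_{R'}` with `u(f(z)) = u(z) + 1`
and `u(z)/z → 1` as `Re z → ∞`. -/
theorem fatou_coordinate_asymptotics
    (R M : ℝ) (hR : 0 < R) (hM : 0 < M) (f : ℂ → ℂ)
    (hol : DifferentiableOn ℂ f {z : ℂ | R ≤ ‖z‖})
    (hbound : ∀ z : ℂ, R ≤ ‖z‖ → ‖f z - (z + 1)‖ ≤ M / ‖z‖) :
    ∃ R' : ℝ, R ≤ R' ∧ ∃ u : ℂ → ℂ,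
      MapsTo f {z : ℂ | R' ≤ z.re} {z : ℂ | R' ≤ z.re} ∧
      DifferentiableOn ℂ u {z : ℂ | R' ≤ z.re} ∧
      (∀ z : ℂ, R' ≤ z.re → u (f z) = u z + 1) ∧
      (∀ δ : ℝ, 0 < δ → ∃ ρ : ℝ, R' ≤ ρ ∧
        ∀ z : ℂ, R' ≤ z.re → ρ ≤ z.re → ‖u z / z - 1‖ ≤ δ) := by
  have hDf : ∀ x : ℂ, R < ‖x‖ → DifferentiableAt ℂ f x := by
    intro x hx
    have hx' : x ∈ {z : ℂ | R ≤ ‖z‖} := le_of_lt hx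
    have hopen : IsOpen {z : ℂ | R < ‖z‖} := isOpen_lt continuous_const continuous_norm
    have hmem : {z : ℂ | R < ‖z‖} ∈ 𝓝 x := hopen.mem_nhds hx
    exact (hol x hx').differentiableAt (Filter.mem_of_superset hmem
      (fun z (hz : R < ‖z‖) => (le_of_lt hz : z ∈ {z : ℂ | R ≤ ‖z‖})))
  obtain ⟨a, C, hC0, hga⟩ := stepA R M hR hM f hDf hbound
  set R₀ : ℝ := max (2*R) (2*M) + 2 with hR₀def
  have hmax1 := le_max_left (2*R) (2*M)
  have hmax2 := le_max_right (2*R) (2*M)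
  have hR₀1 : 2*R ≤ R₀ := by rw [hR₀def]; linarith
  have hR₀2 : 2*M ≤ R₀ := by rw [hR₀def]; linarith
  have hR₀3 : 2 ≤ R₀ := by rw [hR₀def]; linarith
  have hR₀pos : 0 < R₀ := by linarith
  have hRR₀ : R < R₀ := by linarith
  have hstep := stepHalf R M R₀ hR hM f hbound hR₀1 hR₀2 hR₀3
  have horb := orbitStep f R₀ (fun z hz => (hstep z hz).1)
  set C2 : ℝ := C + ‖a‖ * M + 3 * ‖a‖ with hC2def
  have hC2 : 0 ≤ C2 := by positivity
  have hkey := keyEst R M C R₀ hR hM hC0 f a hbound hga hR₀1 hR₀2 hR₀3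
  set L : ℂ → ℂ := fun w => w - a * Complex.log w with hLdef
  set h : ℂ → ℂ := fun w => L (f w) - L w - 1 with hhdef
  have hkey' : ∀ z : ℂ, R₀ ≤ z.re → ‖h z‖ ≤ C2 / z.re ^ 2 := fun z hz => hkey z hz
  have horb' : ∀ (k : ℕ) (z : ℂ), R₀ ≤ z.re → R₀ + (k:ℝ)/2 ≤ (f^[k] z).re :=
    fun k z hz => le_trans (by linarith) (horb k z hz)
  set b : ℕ → ℝ := fun k => C2 / (R₀ + (k:ℝ)/2)^2 with hbdef
  have hbpos : ∀ k : ℕ, 0 < R₀ + (k:ℝ)/2 := fun k => by positivity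
  have hb_sum : Summable b := by
    have hs0 : Summable (fun n : ℕ => 1/((n:ℝ))^2) :=
      Real.summable_one_div_nat_pow.mpr (by norm_num)
    have hs1 : Summable (fun k : ℕ => 4*C2 * (1/((k:ℝ)+1)^2)) := by
      apply Summable.mul_left
      exact ((summable_nat_add_iff 1).mpr hs0).congr (fun n => by push_cast; ring)
    refine Summable.of_nonneg_of_le (fun k => by positivity) (fun k => ?_) hs1
    have h1 : ((k:ℝ)+1)/2 ≤ R₀ + (k:ℝ)/2 := by linarith
    calc C2 / (R₀ + (k:ℝ)/2)^2 ≤ C2 / (((k:ℝ)+1)/2)^2 := by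
          apply div_le_div_of_nonneg_left hC2 (by positivity)
          exact pow_le_pow_left₀ (by positivity) h1 2
      _ = 4*C2 * (1/((k:ℝ)+1)^2) := by
          rw [div_pow]
          have hk1 : ((k:ℝ)+1) ≠ 0 := by positivity
          field_simp
          ring
  have hterm : ∀ z : ℂ, R₀ ≤ z.re → ∀ k : ℕ, ‖h (f^[k] z)‖ ≤ b k := by
    intro z hz k
    have h1 : R₀ + (k:ℝ)/2 ≤ (f^[k] z).re := horb' k z hz
    have hkn : (0:ℝ) ≤ (k:ℝ) := Nat.cast_nonneg k
    have h2 : R₀ ≤ (f^[k] z).re := by linarith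
    calc ‖h (f^[k] z)‖ ≤ C2 / (f^[k] z).re ^ 2 := hkey' _ h2
      _ ≤ C2 / (R₀ + (k:ℝ)/2)^2 := by
          apply div_le_div_of_nonneg_left hC2 (by positivity)
          exact pow_le_pow_left₀ (by positivity) h1 2
  have hsummable : ∀ z : ℂ, R₀ ≤ z.re → Summable (fun k => h (f^[k] z)) :=
    fun z hz => Summable.of_norm_bounded hb_sum (hterm z hz)
  set u : ℂ → ℂ := fun z => L z + ∑' k, h (f^[k] z) with hudef
  set U : Set ℂ := {z : ℂ | R₀ < z.re} with hUdef
  have hUopen : IsOpen U := isOpen_lt continuous_const Complex.continuous_re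
  have horbU : ∀ (k : ℕ) (x : ℂ), x ∈ U → R₀ < (f^[k] x).re := by
    intro k x hx
    have hx' : R₀ < x.re := hx
    have := horb k x hx'.le
    have hkn : (0:ℝ) ≤ (k:ℝ) := Nat.cast_nonneg k
    linarith
  have hiter_diff : ∀ k : ℕ, DifferentiableOn ℂ (f^[k]) U := by
    intro k
    induction k with
    | zero => simpa using differentiableOn_id
    | succ n ih =>
      rw [Function.iterate_succ']
      intro x hx
      have hw : R₀ < (f^[n] x).re := horbU n x hx
      have hd : DifferentiableAt ℂ f (f^[n] x) := by
        apply hDf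
        have := re_le_norm' (f^[n] x)
        linarith
      exact hd.comp_differentiableWithinAt x (ih x hx)
  have hL_at : ∀ w : ℂ, 0 < w.re → DifferentiableAt ℂ L w := by
    intro w hw
    exact differentiableAt_fun_id.sub ((differentiableAt_const a).mul
      (Complex.differentiableAt_log (Complex.mem_slitPlane_iff.mpr (Or.inl hw))))
  have hLiter : ∀ k : ℕ, DifferentiableOn ℂ (fun z => L (f^[k] z)) U := by
    intro k x hx
    have h1 : 0 < (f^[k] x).re := lt_trans hR₀pos (horbU k x hx)
    exact (hL_at _ h1).comp_differentiableWithinAt x ((hiter_diff k) x hx)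
  have hterm_diff : ∀ k : ℕ, DifferentiableOn ℂ (fun z => h (f^[k] z)) U := by
    intro k
    have heq : (fun z => h (f^[k] z)) = fun z => L (f^[k+1] z) - L (f^[k] z) - 1 := by
      funext zz
      simp only [hhdef, Function.iterate_succ_apply']
    rw [heq]
    exact ((hLiter (k+1)).sub (hLiter k)).sub (differentiableOn_const 1)
  have htsum_diff : DifferentiableOn ℂ (fun z => ∑' k, h (f^[k] z)) U :=
    differentiableOn_tsum_of_summable_norm hb_sum hterm_diff hUopen
      (fun k w hw => hterm w (le_of_lt hw) k)
  have hLdiff : DifferentiableOn ℂ L U :=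
    fun x hx => (hL_at x (lt_trans hR₀pos hx)).differentiableWithinAt
  have hu_diff : DifferentiableOn ℂ u U := hLdiff.add htsum_diff
  refine ⟨R₀ + 1, by linarith, u, ?_, ?_, ?_, ?_⟩
  · intro z hz
    have hz' : R₀ + 1 ≤ z.re := hz
    have := (hstep z (by linarith)).1
    show R₀ + 1 ≤ (f z).re
    linarith
  · exact hu_diff.mono (fun x hx => by
      have : R₀ + 1 ≤ x.re := hx
      show R₀ < x.re
      linarith)
  · intro z hz
    have hz0 : R₀ ≤ z.re := by linarith
    have hfz0 : R₀ ≤ (f z).re := by have := (hstep z hz0).1; linarith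
    have hs1 := hsummable z hz0
    have ht1 : ∑' k, h (f^[k] (f z)) = ∑' k, h (f^[k+1] z) :=
      tsum_congr (fun k => by rw [← Function.iterate_succ_apply])
    have ht2 : ∑' k, h (f^[k] z) = h (f^[0] z) + ∑' k, h (f^[k+1] z) := hs1.tsum_eq_zero_add
    show L (f z) + ∑' k, h (f^[k] (f z)) = (L z + ∑' k, h (f^[k] z)) + 1
    rw [ht1, ht2]
    have hh0 : h (f^[0] z) = L (f z) - L z - 1 := by simp [hhdef]
    rw [hh0]
    ring
  · intro δ hδ
    set B : ℝ := ∑' k, b k with hBdef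
    have hB0 : 0 ≤ B := tsum_nonneg (fun k => by positivity)
    have htail : ∀ z : ℂ, R₀ ≤ z.re → ‖∑' k, h (f^[k] z)‖ ≤ B := by
      intro z hz
      have hns : Summable (fun k => ‖h (f^[k] z)‖) :=
        Summable.of_nonneg_of_le (fun k => norm_nonneg _) (hterm z hz) hb_sum
      calc ‖∑' k, h (f^[k] z)‖ ≤ ∑' k, ‖h (f^[k] z)‖ := norm_tsum_le_tsum_norm hns
        _ ≤ B := Summable.tsum_le_tsum (hterm z hz) hns hb_sum
    have hlogb : ∀ z : ℂ, 1 ≤ ‖z‖ → ‖Complex.log z‖ ≤ Real.log ‖z‖ + Real.pi := by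
      intro z hz1
      calc ‖Complex.log z‖ ≤ |(Complex.log z).re| + |(Complex.log z).im| :=
            Complex.norm_le_abs_re_add_abs_im _
        _ ≤ Real.log ‖z‖ + Real.pi := by
            rw [Complex.log_re, Complex.log_im]
            have h1 : |Real.log ‖z‖| = Real.log ‖z‖ :=
              _root_.abs_of_nonneg (Real.log_nonneg hz1)
            rw [h1]
            linarith [Complex.abs_arg_le_pi z]
    have h1 : Tendsto (fun t : ℝ => Real.log t / t) atTop (𝓝 0) := by
      simpa using Real.isLittleO_log_id_atTop.tendsto_div_nhds_zero
    have h2 : Tendsto (fun t : ℝ => t⁻¹) atTop (𝓝 (0:ℝ)) := tendsto_inv_atTop_zero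
    have h3 : Tendsto (fun t : ℝ => (‖a‖ * (Real.log t + Real.pi) + B) / t) atTop (𝓝 0) := by
      have h4 : Tendsto (fun t : ℝ => ‖a‖ * (Real.log t / t) + (‖a‖ * Real.pi + B) * t⁻¹)
          atTop (𝓝 0) := by
        have := (h1.const_mul ‖a‖).add (h2.const_mul (‖a‖ * Real.pi + B))
        simpa using this
      apply h4.congr'
      filter_upwards [eventually_gt_atTop (0:ℝ)] with t ht
      field_simp
      ring
    obtain ⟨ρ₀, hρ₀⟩ := eventually_atTop.mp (h3.eventually (gt_mem_nhds hδ))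
    refine ⟨max (R₀ + 1) ρ₀, le_max_left _ _, ?_⟩
    intro z hz1 hz2
    have hz0 : R₀ ≤ z.re := by linarith
    have hzn : z.re ≤ ‖z‖ := re_le_norm' z
    have hnz : 0 < ‖z‖ := by linarith
    have hz0' : z ≠ 0 := by simpa [norm_pos_iff] using hnz
    have hzρ : ρ₀ ≤ ‖z‖ := le_trans (le_trans (le_max_right _ _) hz2) hzn
    have hφ := hρ₀ ‖z‖ hzρ
    have hnum : ‖u z - z‖ ≤ ‖a‖ * (Real.log ‖z‖ + Real.pi) + B := by
      have hdecomp : u z - z = -(a * Complex.log z) + ∑' k, h (f^[k] z) := by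
        show (L z + ∑' k, h (f^[k] z)) - z = -(a * Complex.log z) + ∑' k, h (f^[k] z)
        rw [hLdef]
        ring
      rw [hdecomp]
      have e1 := hlogb z (by linarith)
      have e2 := htail z hz0
      calc ‖-(a * Complex.log z) + ∑' k, h (f^[k] z)‖
          ≤ ‖-(a * Complex.log z)‖ + ‖∑' k, h (f^[k] z)‖ := norm_add_le _ _
        _ = ‖a‖ * ‖Complex.log z‖ + ‖∑' k, h (f^[k] z)‖ := by rw [norm_neg, norm_mul]
        _ ≤ ‖a‖ * (Real.log ‖z‖ + Real.pi) + B := by gcongr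
    have hquot : u z / z - 1 = (u z - z) / z := by field_simp
    rw [hquot, norm_div]
    calc ‖u z - z‖ / ‖z‖ ≤ (‖a‖ * (Real.log ‖z‖ + Real.pi) + B) / ‖z‖ := by gcongr
      _ ≤ δ := le_of_lt hφ
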